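/- Let H be a finite connected non-bipartite graph, (v₀,v₁) an edge of H, and for n ≥ 1 let C_n^{(v₀,v₁)} be the set of graph homomorphisms a : F_n → H with a_i = v_{parity(i)} for all i in the boundary shell F_n \ F_{n−1}. Then there exists N ∈ ℕ (depending only on H) such that for any edges (v₀,v₁), (w₀,w₁) of H, any n ∈ ℕ, any k ≥ N, and any a ∈ C_n^{(v₀,v₁)}, there exists ã ∈ C_{n+k}^{(w₀,w₁)} with ã|_{F_n} = a. -/
import Mathlib

/-- Adjacency in the standard Cayley graph of `ℤ^d`: ℓ¹-distance one. -/
def adjZ {d : ℕ} (i j : Fin d → ℤ) : Prop := (∑ t, |i t - j t|) = 1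

/-- The box `F_n = {−n,…,n}^d`. -/
def boxF {d : ℕ} (n : ℕ) : Set (Fin d → ℤ) := {i | ∀ t, |i t| ≤ (n : ℤ)}

/-! ### Walks in an abstract graph -/

def Wk {V : Type*} (Adj : V → V → Prop) (u v : V) (m : ℕ) : Prop :=
  ∃ p : ℕ → V, p 0 = u ∧ p m = v ∧ ∀ i < m, Adj (p i) (p (i + 1))

lemma wk_refl {V : Type*} (Adj : V → V → Prop) (u : V) : Wk Adj u u 0 :=
  ⟨fun _ => u, rfl, rfl, by omega⟩

lemma wk_trans {V : Type*} {Adj : V → V → Prop} {u v w : V} {m₁ m₂ : ℕ}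
    (h1 : Wk Adj u v m₁) (h2 : Wk Adj v w m₂) : Wk Adj u w (m₁ + m₂) := by
  obtain ⟨p, hp0, hpm, hpe⟩ := h1
  obtain ⟨q, hq0, hqm, hqe⟩ := h2
  refine ⟨fun i => if i ≤ m₁ then p i else q (i - m₁), by simp [hp0], ?_, ?_⟩
  · by_cases h : m₂ = 0
    · subst h
      simp only [Nat.add_zero, le_refl, if_pos]
      rw [hpm, ← hq0]; exact hqm
    · have : ¬ (m₁ + m₂ ≤ m₁) := by omega
      simp only [this, if_false]
      simpa using hqm
  · intro i hi
    by_cases h1 : i + 1 ≤ m₁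
    · have h0 : i ≤ m₁ := by omega
      simp only [h0, h1, if_true]
      exact hpe i (by omega)
    · by_cases h0 : i ≤ m₁
      · have hie : i = m₁ := by omega
        simp only [h0, h1, if_true, if_false]
        subst hie
        have : i + 1 - i = 1 := by omega
        rw [this, hpm, ← hq0]
        exact hqe 0 (by omega)
      · simp only [h0, h1, if_false]
        have e1 : i + 1 - m₁ = (i - m₁) + 1 := by omega
        rw [e1]
        exact hqe (i - m₁) (by omega)

lemma wk_even {V : Type*} {Adj : V → V → Prop} (hsymm : ∀ u v, Adj u v → Adj v u)
    (hnbr : ∀ u : V, ∃ x, Adj u x) (u : V) (a : ℕ) : Wk Adj u u (2 * a) := by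
  induction a with
  | zero => exact wk_refl Adj u
  | succ a ih =>
      have : 2 * (a + 1) = 2 * a + 2 := by ring
      rw [this]
      refine wk_trans ih ?_
      obtain ⟨x, hx⟩ := hnbr u
      refine ⟨fun i => if i = 1 then x else u, by simp, by simp, ?_⟩
      intro i hi
      interval_cases i <;> simpa using by first | exact hx | exact hsymm _ _ hx

lemma wk_exists_N {V : Type*} [Fintype V] (Adj : V → V → Prop)
    (hsymm : ∀ u v, Adj u v → Adj v u)
    (hconn : ∀ u v : V, ∃ n : ℕ, Wk Adj u v n)
    (hodd : ∃ v : V, ∃ n : ℕ, Odd n ∧ Wk Adj v v n) :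
    ∃ N : ℕ, 2 ≤ N ∧ ∀ u v : V, ∀ m : ℕ, N ≤ m → Wk Adj u v m := by
  obtain ⟨v', n₀, hodd₀, hw₀⟩ := hodd
  have hn₀1 : 1 ≤ n₀ := hodd₀.pos
  have hnbr : ∀ u : V, ∃ x, Adj u x := by
    intro u
    obtain ⟨ℓ, p, hp0, hpm, hpe⟩ := hconn u v'
    match ℓ, hpm, hpe with
    | 0, hpm, _ =>
        obtain ⟨q, hq0, _, hqe⟩ := hw₀
        exact ⟨q 1, by rw [← hp0, hpm, ← hq0]; exact hqe 0 (by omega)⟩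
    | (l+1), _, hpe => exact ⟨p 1, by rw [← hp0]; exact hpe 0 (by omega)⟩
  choose ℓ hℓ using hconn
  set L : ℕ := Finset.univ.sup (fun uv : V × V => ℓ uv.1 uv.2) with hL
  have hℓle : ∀ u v : V, ℓ u v ≤ L := fun u v =>
    Finset.le_sup (f := fun uv : V × V => ℓ uv.1 uv.2) (Finset.mem_univ (u, v))
  refine ⟨2 * L + n₀ + 1, by omega, ?_⟩
  intro u v m hm
  have h1 : ℓ u v' ≤ L := hℓle u v'
  have h2 : ℓ v' v ≤ L := hℓle v' v
  have key : ∀ (s : ℕ), Wk Adj u v (2 * s + (ℓ u v' + ℓ v' v)) := fun s =>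
    wk_trans (wk_even hsymm hnbr u s) (wk_trans (hℓ u v') (hℓ v' v))
  have key2 : ∀ (s : ℕ), Wk Adj u v (2 * s + (ℓ u v' + (n₀ + ℓ v' v))) := fun s =>
    wk_trans (wk_even hsymm hnbr u s) (wk_trans (hℓ u v') (wk_trans hw₀ (hℓ v' v)))
  rcases Nat.even_or_odd (m - (ℓ u v' + ℓ v' v)) with he | ho
  · obtain ⟨s, hs⟩ := he
    have : m = 2 * s + (ℓ u v' + ℓ v' v) := by omega
    exact this ▸ key s
  · obtain ⟨s, hs⟩ := ho
    obtain ⟨t, ht⟩ := hodd₀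
    have : m = 2 * (s - t) + (ℓ u v' + (n₀ + ℓ v' v)) := by omega
    exact this ▸ key2 (s - t)

/-! ### Geometry of the box -/

/-- ℓ∞ radius. -/
def rad {d : ℕ} (i : Fin d → ℤ) : ℕ := Finset.univ.sup fun t => (i t).natAbs

lemma mem_boxF {d : ℕ} {n : ℕ} {i : Fin d → ℤ} : i ∈ boxF n ↔ rad i ≤ n := by
  simp only [boxF, Set.mem_setOf_eq, rad, Finset.sup_le_iff, Finset.mem_univ, true_imp_iff]
  constructor <;> intro h t <;> have := h t <;> rw [Int.abs_eq_natAbs] at * <;> omega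

lemma adjZ_symm {d : ℕ} {i j : Fin d → ℤ} (h : adjZ i j) : adjZ j i := by
  rw [adjZ] at *
  rw [← h]
  exact Finset.sum_congr rfl fun t _ => abs_sub_comm _ _

lemma adjZ_abs_le {d : ℕ} {i j : Fin d → ℤ} (h : adjZ i j) (t : Fin d) :
    |i t - j t| ≤ 1 := by
  rw [adjZ] at h
  calc |i t - j t| ≤ ∑ s, |i s - j s| :=
        Finset.single_le_sum (f := fun s => |i s - j s|)
          (fun s _ => abs_nonneg _) (Finset.mem_univ t)
    _ = 1 := h

lemma adjZ_rad {d : ℕ} {i j : Fin d → ℤ} (h : adjZ i j) : rad j ≤ rad i + 1 := by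
  rw [rad, Finset.sup_le_iff]
  intro t _
  have h1 := adjZ_abs_le h t
  have h2 : (i t).natAbs ≤ rad i :=
    Finset.le_sup (f := fun t => (i t).natAbs) (Finset.mem_univ t)
  rw [abs_le] at h1
  omega

lemma adjZ_sum {d : ℕ} {i j : Fin d → ℤ} (h : adjZ i j) :
    (∑ t, i t) - (∑ t, j t) = 1 ∨ (∑ t, j t) - (∑ t, i t) = 1 := by
  rw [adjZ] at h
  have h1 : |(∑ t, i t) - (∑ t, j t)| ≤ 1 := by
    rw [← Finset.sum_sub_distrib, ← h]
    exact Finset.abs_sum_le_sum_abs _ _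
  have h2 : (2 : ℤ) ∣ (1 - ((∑ t, i t) - (∑ t, j t))) := by
    rw [← h, ← Finset.sum_sub_distrib, ← Finset.sum_sub_distrib]
    exact Finset.dvd_sum fun t _ => by rcases abs_cases (i t - j t) with ⟨he, _⟩ | ⟨he, _⟩ <;>
      rw [he] <;> ring_nf <;> omega
  rw [abs_le] at h1
  omega

/-! ### The level function φ and vertex selectors -/

def phiF {d : ℕ} (n : ℕ) (i : Fin d → ℤ) : ℤ :=
  if (2 : ℤ) ∣ ((rad i : ℤ) - ∑ t, i t) then (rad i : ℤ) - n else (rad i : ℤ) - n + 1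

lemma phiF_lb {d : ℕ} (n : ℕ) (i : Fin d → ℤ) : (rad i : ℤ) - n ≤ phiF n i := by
  rw [phiF]; split_ifs <;> omega

lemma phiF_ub {d : ℕ} (n : ℕ) (i : Fin d → ℤ) : phiF n i ≤ (rad i : ℤ) - n + 1 := by
  rw [phiF]; split_ifs <;> omega

lemma phiF_par {d : ℕ} (n : ℕ) (i : Fin d → ℤ) :
    (2 : ℤ) ∣ (phiF n i - (∑ t, i t) - n) := by
  rw [phiF]; split_ifs with h <;> omega

lemma phiF_step {d : ℕ} (n : ℕ) {i j : Fin d → ℤ} (h : adjZ i j) :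
    phiF n j = phiF n i + 1 ∨ phiF n i = phiF n j + 1 := by
  have h1 := adjZ_rad h
  have h2 := adjZ_rad (adjZ_symm h)
  have h3 := adjZ_sum h
  have h4 := phiF_par (d := d) n i
  have h5 := phiF_par (d := d) n j
  have l1 := phiF_lb n i
  have l2 := phiF_ub n i
  have l3 := phiF_lb n j
  have l4 := phiF_ub n j
  omega

def vsel {V : Type*} (v₀ v₁ : V) (s : ℤ) : V := if s % 2 = 0 then v₀ else v₁

lemma vsel_congr {V : Type*} (v₀ v₁ : V) {s s' : ℤ} (h : s % 2 = s' % 2) :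
    vsel v₀ v₁ s = vsel v₀ v₁ s' := by rw [vsel, vsel, h]

lemma vsel_adj {V : Type*} {Adj : V → V → Prop} (hsymm : ∀ u v, Adj u v → Adj v u)
    {v₀ v₁ : V} (hv : Adj v₀ v₁) (s : ℤ) : Adj (vsel v₀ v₁ s) (vsel v₀ v₁ (s + 1)) := by
  rw [vsel, vsel]
  rcases Int.emod_two_eq s with h | h
  · rw [if_pos h, if_neg (by omega)]; exact hv
  · rw [if_neg (by omega), if_pos (by omega)]; exact hsymm _ _ hv

theorem stmt18 {V : Type*} [Fintype V] (Adj : V → V → Prop)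
    (hsymm : ∀ u v, Adj u v → Adj v u)
    -- H is connected:
    (hconn : ∀ u v : V, ∃ n : ℕ, ∃ p : ℕ → V,
      p 0 = u ∧ p n = v ∧ ∀ i < n, Adj (p i) (p (i + 1)))
    -- H is non-bipartite (has a closed walk of odd length):
    (hodd : ∃ v : V, ∃ n : ℕ, Odd n ∧ ∃ p : ℕ → V,
      p 0 = v ∧ p n = v ∧ ∀ i < n, Adj (p i) (p (i + 1)))
    (d : ℕ) :
    ∃ N : ℕ, ∀ v₀ v₁ w₀ w₁ : V, Adj v₀ v₁ → Adj w₀ w₁ →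
      ∀ n : ℕ, 1 ≤ n → ∀ k : ℕ, N ≤ k →
      ∀ a : (Fin d → ℤ) → V,
        (∀ i ∈ boxF (d := d) n, ∀ j ∈ boxF n, adjZ i j → Adj (a i) (a j)) →
        (∀ i ∈ boxF (d := d) n \ boxF (n - 1),
          a i = if (∑ t, i t) % 2 = 0 then v₀ else v₁) →
        ∃ b : (Fin d → ℤ) → V,
          (∀ i ∈ boxF (d := d) (n + k), ∀ j ∈ boxF (n + k), adjZ i j → Adj (b i) (b j)) ∧
          (∀ i ∈ boxF (d := d) n, b i = a i) ∧
          (∀ i ∈ boxF (d := d) (n + k) \ boxF (n + k - 1),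
            b i = if (∑ t, i t) % 2 = 0 then w₀ else w₁) := by
  classical
  obtain ⟨Nw, hNw2, hNw⟩ := wk_exists_N Adj hsymm (fun u v => hconn u v) hodd
  refine ⟨Nw + 1, ?_⟩
  intro v₀ v₁ w₀ w₁ hv hw n hn k hk a ha hab
  have hk2 : 2 ≤ k := by omega
  -- the connecting walk
  obtain ⟨p, hp0, hpk, hpe⟩ :=
    hNw (vsel v₀ v₁ ((n : ℤ) + 1)) (vsel w₀ w₁ ((n : ℤ) + k)) (k - 1) (by omega)
  -- the radial coloring
  set c : ℤ → V := fun m =>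
    if m ≤ 0 then vsel v₀ v₁ (n : ℤ)
    else if m ≤ (k : ℤ) then p (m - 1).toNat
    else vsel w₀ w₁ ((n : ℤ) + k + 1) with hcd
  have hc0 : c 0 = vsel v₀ v₁ (n : ℤ) := by simp [hcd]
  have hc1 : c 1 = vsel v₀ v₁ ((n : ℤ) + 1) := by
    simp only [hcd]
    rw [if_neg (by omega), if_pos (by exact_mod_cast Nat.one_le_cast.mpr (by omega))]
    norm_num [hp0]
  have hck : c (k : ℤ) = vsel w₀ w₁ ((n : ℤ) + k) := by
    simp only [hcd]
    rw [if_neg (by omega), if_pos le_rfl]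
    have e : ((k : ℤ) - 1).toNat = k - 1 := by omega
    rw [e, hpk]
  have hck1 : c ((k : ℤ) + 1) = vsel w₀ w₁ ((n : ℤ) + k + 1) := by
    simp only [hcd]
    rw [if_neg (by omega), if_neg (by omega)]
  have hc_edge : ∀ m : ℤ, 0 ≤ m → m ≤ (k : ℤ) → Adj (c m) (c (m + 1)) := by
    intro m h0 h1
    rcases eq_or_lt_of_le h0 with h | h
    · obtain rfl : m = 0 := h.symm
      rw [hc0, zero_add, hc1]
      exact vsel_adj hsymm hv _
    · rcases eq_or_lt_of_le h1 with h2 | h2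
      · subst h2
        rw [hck, hck1]
        exact vsel_adj hsymm hw _
      · have e1 : c m = p (m - 1).toNat := by
          simp only [hcd]; rw [if_neg (by omega), if_pos (by omega)]
        have e2 : c (m + 1) = p m.toNat := by
          simp only [hcd]; rw [if_neg (by omega), if_pos (by omega)]
          congr 1; omega
        rw [e1, e2]
        have he := hpe (m - 1).toNat (by omega)
        have e3 : (m - 1).toNat + 1 = m.toNat := by omega
        rw [e3] at he
        exact he
  -- boundary compatibility with a
  have hcφ : ∀ i : Fin d → ℤ, rad i = n → c (phiF n i) = a i := by
    intro i hri
    have mem1 : i ∈ boxF (d := d) n := mem_boxF.2 (le_of_eq hri)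
    have mem2 : i ∉ boxF (d := d) (n - 1) := fun h => by
      have := mem_boxF.1 h; omega
    have hai : a i = vsel v₀ v₁ (∑ t, i t) := hab i ⟨mem1, mem2⟩
    have l1 := phiF_lb n i
    have l2 := phiF_ub n i
    have par := phiF_par (d := d) n i
    have : phiF n i = 0 ∨ phiF n i = 1 := by omega
    rcases this with h | h
    · rw [h, hc0, hai]
      exact (vsel_congr v₀ v₁ (by omega)).symm
    · rw [h, hc1, hai]
      exact (vsel_congr v₀ v₁ (by omega)).symm
  -- adjacency of the radial coloring
  have hbc : ∀ i j : Fin d → ℤ, adjZ i j → rad i ≤ n + k → rad j ≤ n + k →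
      n ≤ rad i → n ≤ rad j → Adj (c (phiF n i)) (c (phiF n j)) := by
    intro i j hij hri hrj hni hnj
    have l1 := phiF_lb n i
    have l2 := phiF_ub n i
    have l3 := phiF_lb n j
    have l4 := phiF_ub n j
    rcases phiF_step n hij with h | h
    · rw [h]
      exact hc_edge _ (by omega) (by omega)
    · exact hsymm _ _ (by rw [h]; exact hc_edge _ (by omega) (by omega))
  refine ⟨fun i => if i ∈ boxF (d := d) n then a i else c (phiF n i), ?_, ?_, ?_⟩
  · intro i hi j hj hij
    have hri : rad i ≤ n + k := mem_boxF.1 hi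
    have hrj : rad j ≤ n + k := mem_boxF.1 hj
    have hr1 : rad j ≤ rad i + 1 := adjZ_rad hij
    have hr2 : rad i ≤ rad j + 1 := adjZ_rad (adjZ_symm hij)
    by_cases h1 : i ∈ boxF (d := d) n <;> by_cases h2 : j ∈ boxF (d := d) n <;>
      simp only [h1, h2, if_true, if_false]
    · exact ha i h1 j h2 hij
    · have hbj : ¬ rad j ≤ n := fun h => h2 (mem_boxF.2 h)
      have hbi : rad i ≤ n := mem_boxF.1 h1
      have hrin : rad i = n := by omega
      rw [← hcφ i hrin]
      exact hbc i j hij (by omega) hrj (by omega) (by omega)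
    · have hbi : ¬ rad i ≤ n := fun h => h1 (mem_boxF.2 h)
      have hbj : rad j ≤ n := mem_boxF.1 h2
      have hrjn : rad j = n := by omega
      rw [← hcφ j hrjn]
      exact hbc i j hij hri (by omega) (by omega) (by omega)
    · have hbi : ¬ rad i ≤ n := fun h => h1 (mem_boxF.2 h)
      have hbj : ¬ rad j ≤ n := fun h => h2 (mem_boxF.2 h)
      exact hbc i j hij hri hrj (by omega) (by omega)
  · intro i hi
    simp only [hi, if_true]
  · rintro i ⟨hi1, hi2⟩
    have hri : rad i ≤ n + k := mem_boxF.1 hi1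
    have hri2 : ¬ rad i ≤ n + k - 1 := fun h => hi2 (mem_boxF.2 h)
    have hrin : rad i = n + k := by omega
    have hnot : i ∉ boxF (d := d) n := fun h => by
      have := mem_boxF.1 h; omega
    simp only [hnot, if_false]
    show c (phiF n i) = vsel w₀ w₁ (∑ t, i t)
    have l1 := phiF_lb n i
    have l2 := phiF_ub n i
    have par := phiF_par (d := d) n i
    have : phiF n i = (k : ℤ) ∨ phiF n i = (k : ℤ) + 1 := by omega
    rcases this with h | h
    · rw [h, hck]
      exact vsel_congr w₀ w₁ (by omega)
    · rw [h, hck1]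
      exact vsel_congr w₀ w₁ (by omega)
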